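/- Let G be a graph, U a nonempty set of its vertices, and let G̃ be obtained from G by adding four new vertices a, b, c, d with edges ab, bc, cd, da, plus an edge av for every v ∈ U. Then the number of maximal independent sets of G̃ satisfies mis(G̃) ≤ 2·mis(G) + mis(G − U), with equality if and only if G has no maximal independent set disjoint from U. -/

import Mathlib

/-- `S` is a maximal independent set. -/
def IsMaxIndep {V : Type*} (adj : V → V → Prop) (S : Set V) : Prop :=
  (∀ u ∈ S, ∀ v ∈ S, ¬ adj u v) ∧ ∀ v, v ∉ S → ∃ u ∈ S, adj u v

/-- Number of maximal independent sets. -/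
noncomputable def misc {V : Type*} (adj : V → V → Prop) : ℕ :=
  Set.ncard {S : Set V | IsMaxIndep adj S}

/-- `S` is a maximal independent set of the subgraph induced on `W`. -/
def IsMaxIndepOn {V : Type*} (adj : V → V → Prop) (W S : Set V) : Prop :=
  S ⊆ W ∧ (∀ u ∈ S, ∀ v ∈ S, ¬ adj u v) ∧ ∀ v ∈ W, v ∉ S → ∃ u ∈ S, adj u v

/-- The graph `G̃`: `G` together with a 4-cycle `a b c d` (`a = Sum.inr 0`,
`b = Sum.inr 1`, `c = Sum.inr 2`, `d = Sum.inr 3`) where `a` is additionally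
adjacent to every vertex of `U`. -/
def tildeG {V : Type*} (G : SimpleGraph V) (U : Set V) : SimpleGraph (V ⊕ Fin 4) where
  Adj a b :=
    match a, b with
    | Sum.inl u, Sum.inl v => G.Adj u v
    | Sum.inl u, Sum.inr i => i = 0 ∧ u ∈ U
    | Sum.inr i, Sum.inl u => i = 0 ∧ u ∈ U
    | Sum.inr i, Sum.inr j => j.val = (i.val + 1) % 4 ∨ i.val = (j.val + 1) % 4
  symm := by
    constructor
    rintro (u | i) (v | j) h
    · exact h.symm
    · exact h
    · exact h
    · exact h.symm
  loopless := by
    constructor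
    rintro (u | i) h
    · exact G.irrefl h
    · rcases h with h | h <;> omega

namespace Stmt17Aux

variable {V : Type*} {G : SimpleGraph V} {U : Set V}

lemma tadj_ll {u v : V} : (tildeG G U).Adj (Sum.inl u) (Sum.inl v) ↔ G.Adj u v := Iff.rfl
lemma tadj_lr {u : V} {i : Fin 4} :
    (tildeG G U).Adj (Sum.inl u) (Sum.inr i) ↔ i = 0 ∧ u ∈ U := Iff.rfl
lemma tadj_rl {u : V} {i : Fin 4} :
    (tildeG G U).Adj (Sum.inr i) (Sum.inl u) ↔ i = 0 ∧ u ∈ U := Iff.rfl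
lemma tadj_rr {i j : Fin 4} :
    (tildeG G U).Adj (Sum.inr i) (Sum.inr j) ↔
      j.val = (i.val + 1) % 4 ∨ i.val = (j.val + 1) % 4 := Iff.rfl

lemma fin4_cases : ∀ i : Fin 4, i = 0 ∨ i = 1 ∨ i = 2 ∨ i = 3 := by decide

def fac (S : Set V) : Set (V ⊕ Fin 4) := Sum.inl '' S ∪ {Sum.inr 0, Sum.inr 2}
def fbd (S : Set V) : Set (V ⊕ Fin 4) := Sum.inl '' S ∪ {Sum.inr 1, Sum.inr 3}
def fc (S : Set V) : Set (V ⊕ Fin 4) := Sum.inl '' S ∪ {Sum.inr 2}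

lemma mem_fac_inl {w : V} {S : Set V} : Sum.inl w ∈ fac S ↔ w ∈ S := by simp [fac]
lemma mem_fbd_inl {w : V} {S : Set V} : Sum.inl w ∈ fbd S ↔ w ∈ S := by simp [fbd]
lemma mem_fc_inl {w : V} {S : Set V} : Sum.inl w ∈ fc S ↔ w ∈ S := by simp [fc]
lemma mem_fac_inr {i : Fin 4} {S : Set V} : Sum.inr i ∈ fac S ↔ i = 0 ∨ i = 2 := by
  simp [fac]
lemma mem_fbd_inr {i : Fin 4} {S : Set V} : Sum.inr i ∈ fbd S ↔ i = 1 ∨ i = 3 := by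
  simp [fbd]
lemma mem_fc_inr {i : Fin 4} {S : Set V} : Sum.inr i ∈ fc S ↔ i = 2 := by
  simp [fc]

lemma preim_fac (S : Set V) : Sum.inl ⁻¹' fac S = S := by ext u; exact mem_fac_inl
lemma preim_fbd (S : Set V) : Sum.inl ⁻¹' fbd S = S := by ext u; exact mem_fbd_inl
lemma preim_fc (S : Set V) : Sum.inl ⁻¹' fc S = S := by ext u; exact mem_fc_inl

lemma fac_inj : Function.Injective (fac (V := V)) := fun S T h => by
  rw [← preim_fac S, ← preim_fac T, h]
lemma fbd_inj : Function.Injective (fbd (V := V)) := fun S T h => by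
  rw [← preim_fbd S, ← preim_fbd T, h]
lemma fc_inj : Function.Injective (fc (V := V)) := fun S T h => by
  rw [← preim_fc S, ← preim_fc T, h]

/-- key structural equality -/
theorem keyEq (G : SimpleGraph V) (U : Set V) :
    {T : Set (V ⊕ Fin 4) | IsMaxIndep (tildeG G U).Adj T} =
      fac '' {S : Set V | IsMaxIndepOn G.Adj Uᶜ S} ∪
      fbd '' {S : Set V | IsMaxIndep G.Adj S} ∪
      fc '' {S : Set V | IsMaxIndep G.Adj S ∧ (S ∩ U).Nonempty} := by
  ext T
  constructor
  · rintro ⟨hind, hdom⟩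
    set S : Set V := Sum.inl ⁻¹' T with hSdef
    have hSind : ∀ u ∈ S, ∀ v ∈ S, ¬ G.Adj u v := fun u hu v hv h =>
      hind _ hu _ hv (tadj_ll.mpr h)
    by_cases h0 : Sum.inr 0 ∈ T
    · -- a ∈ T; forces c ∈ T, b,d ∉ T
      have h1 : Sum.inr 1 ∉ T := fun h1 =>
        hind _ h0 _ h1 (tadj_rr.mpr (by decide))
      have h3 : Sum.inr 3 ∉ T := fun h3 =>
        hind _ h0 _ h3 (tadj_rr.mpr (by decide))
      have h2 : Sum.inr 2 ∈ T := by
        by_contra h2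
        obtain ⟨u, hu, hadj⟩ := hdom _ h2
        rcases u with w | i
        · exact absurd (tadj_lr.mp hadj).1 (by decide)
        · rcases fin4_cases i with rfl | rfl | rfl | rfl
          · exact absurd (tadj_rr.mp hadj) (by decide)
          · exact h1 hu
          · exact absurd (tadj_rr.mp hadj) (by decide)
          · exact h3 hu
      left; left
      refine ⟨S, ⟨?_, hSind, ?_⟩, ?_⟩
      · intro u hu huU
        exact hind _ h0 _ hu (tadj_rl.mpr ⟨rfl, huU⟩)
      · intro v hv hvS
        obtain ⟨u, hu, hadj⟩ := hdom _ hvS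
        rcases u with w | i
        · exact ⟨w, hu, tadj_ll.mp hadj⟩
        · exact absurd (tadj_rl.mp hadj).2 hv
      · ext x
        constructor
        · intro hx
          rcases x with w | i
          · exact (mem_fac_inl.mp hx : w ∈ S)
          · rcases mem_fac_inr.mp hx with rfl | rfl
            · exact h0
            · exact h2
        · intro hx
          rcases x with w | i
          · exact mem_fac_inl.mpr hx
          · rcases fin4_cases i with rfl | rfl | rfl | rfl
            · exact mem_fac_inr.mpr (Or.inl rfl)
            · exact absurd hx h1
            · exact mem_fac_inr.mpr (Or.inr rfl)
            · exact absurd hx h3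
    · by_cases h2 : Sum.inr 2 ∈ T
      · -- c ∈ T, a ∉ T
        have h1 : Sum.inr 1 ∉ T := fun h1 =>
          hind _ h2 _ h1 (tadj_rr.mpr (by decide))
        have h3 : Sum.inr 3 ∉ T := fun h3 =>
          hind _ h2 _ h3 (tadj_rr.mpr (by decide))
        have hSdom : ∀ v, v ∉ S → ∃ u ∈ S, G.Adj u v := by
          intro v hv
          obtain ⟨u, hu, hadj⟩ := hdom _ hv
          rcases u with w | i
          · exact ⟨w, hu, tadj_ll.mp hadj⟩
          · exact absurd ((tadj_rl.mp hadj).1 ▸ hu) h0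
        have hSU : (S ∩ U).Nonempty := by
          obtain ⟨u, hu, hadj⟩ := hdom _ h0
          rcases u with w | i
          · exact ⟨w, hu, (tadj_lr.mp hadj).2⟩
          · rcases fin4_cases i with rfl | rfl | rfl | rfl
            · exact absurd hu h0
            · exact absurd hu h1
            · exact absurd (tadj_rr.mp hadj) (by decide)
            · exact absurd hu h3
        right
        refine ⟨S, ⟨⟨hSind, hSdom⟩, hSU⟩, ?_⟩
        ext x
        constructor
        · intro hx
          rcases x with w | i
          · exact (mem_fc_inl.mp hx : w ∈ S)
          · rcases mem_fc_inr.mp hx with rfl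
            exact h2
        · intro hx
          rcases x with w | i
          · exact mem_fc_inl.mpr hx
          · rcases fin4_cases i with rfl | rfl | rfl | rfl
            · exact absurd hx h0
            · exact absurd hx h1
            · exact mem_fc_inr.mpr rfl
            · exact absurd hx h3
      · -- a ∉ T, c ∉ T: forces b, d ∈ T
        have h1 : Sum.inr 1 ∈ T := by
          by_contra h1
          obtain ⟨u, hu, hadj⟩ := hdom _ h1
          rcases u with w | i
          · exact absurd (tadj_lr.mp hadj).1 (by decide)
          · rcases fin4_cases i with rfl | rfl | rfl | rfl
            · exact h0 hu
            · exact absurd (tadj_rr.mp hadj) (by decide)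
            · exact h2 hu
            · exact absurd (tadj_rr.mp hadj) (by decide)
        have h3 : Sum.inr 3 ∈ T := by
          by_contra h3
          obtain ⟨u, hu, hadj⟩ := hdom _ h3
          rcases u with w | i
          · exact absurd (tadj_lr.mp hadj).1 (by decide)
          · rcases fin4_cases i with rfl | rfl | rfl | rfl
            · exact h0 hu
            · exact absurd (tadj_rr.mp hadj) (by decide)
            · exact h2 hu
            · exact absurd (tadj_rr.mp hadj) (by decide)
        have hSdom : ∀ v, v ∉ S → ∃ u ∈ S, G.Adj u v := by
          intro v hv
          obtain ⟨u, hu, hadj⟩ := hdom _ hv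
          rcases u with w | i
          · exact ⟨w, hu, tadj_ll.mp hadj⟩
          · exact absurd ((tadj_rl.mp hadj).1 ▸ hu) h0
        left; right
        refine ⟨S, ⟨hSind, hSdom⟩, ?_⟩
        ext x
        constructor
        · intro hx
          rcases x with w | i
          · exact (mem_fbd_inl.mp hx : w ∈ S)
          · rcases mem_fbd_inr.mp hx with rfl | rfl
            · exact h1
            · exact h3
        · intro hx
          rcases x with w | i
          · exact mem_fbd_inl.mpr hx
          · rcases fin4_cases i with rfl | rfl | rfl | rfl
            · exact absurd hx h0
            · exact mem_fbd_inr.mpr (Or.inl rfl)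
            · exact absurd hx h2
            · exact mem_fbd_inr.mpr (Or.inr rfl)
  · rintro ((⟨S, ⟨hSU, hSind, hSdom⟩, rfl⟩ | ⟨S, ⟨hSind, hSdom⟩, rfl⟩) |
      ⟨S, ⟨⟨hSind, hSdom⟩, u₀, hu₀S, hu₀U⟩, rfl⟩)
    · -- fac S
      constructor
      · rintro (w | i) hx (v | j) hy hadj
        · exact hSind w (mem_fac_inl.mp hx) v (mem_fac_inl.mp hy) (tadj_ll.mp hadj)
        · exact hSU (mem_fac_inl.mp hx) (tadj_lr.mp hadj).2
        · exact hSU (mem_fac_inl.mp hy) (tadj_rl.mp hadj).2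
        · rcases mem_fac_inr.mp hx with rfl | rfl <;>
            rcases mem_fac_inr.mp hy with rfl | rfl <;>
            exact absurd (tadj_rr.mp hadj) (by decide)
      · rintro (v | i) hx
        · by_cases hvU : v ∈ U
          · exact ⟨Sum.inr 0, mem_fac_inr.mpr (Or.inl rfl), tadj_rl.mpr ⟨rfl, hvU⟩⟩
          · have hvS : v ∉ S := fun hvS => hx (mem_fac_inl.mpr hvS)
            obtain ⟨u, hu, hadj⟩ := hSdom v hvU hvS
            exact ⟨Sum.inl u, mem_fac_inl.mpr hu, tadj_ll.mpr hadj⟩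
        · rcases fin4_cases i with rfl | rfl | rfl | rfl
          · exact absurd (mem_fac_inr.mpr (Or.inl rfl)) hx
          · exact ⟨Sum.inr 0, mem_fac_inr.mpr (Or.inl rfl), tadj_rr.mpr (by decide)⟩
          · exact absurd (mem_fac_inr.mpr (Or.inr rfl)) hx
          · exact ⟨Sum.inr 0, mem_fac_inr.mpr (Or.inl rfl), tadj_rr.mpr (by decide)⟩
    · -- fbd S
      constructor
      · rintro (w | i) hx (v | j) hy hadj
        · exact hSind w (mem_fbd_inl.mp hx) v (mem_fbd_inl.mp hy) (tadj_ll.mp hadj)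
        · rcases mem_fbd_inr.mp hy with rfl | rfl <;>
            exact absurd (tadj_lr.mp hadj).1 (by decide)
        · rcases mem_fbd_inr.mp hx with rfl | rfl <;>
            exact absurd (tadj_rl.mp hadj).1 (by decide)
        · rcases mem_fbd_inr.mp hx with rfl | rfl <;>
            rcases mem_fbd_inr.mp hy with rfl | rfl <;>
            exact absurd (tadj_rr.mp hadj) (by decide)
      · rintro (v | i) hx
        · have hvS : v ∉ S := fun hvS => hx (mem_fbd_inl.mpr hvS)
          obtain ⟨u, hu, hadj⟩ := hSdom v hvS
          exact ⟨Sum.inl u, mem_fbd_inl.mpr hu, tadj_ll.mpr hadj⟩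
        · rcases fin4_cases i with rfl | rfl | rfl | rfl
          · exact ⟨Sum.inr 1, mem_fbd_inr.mpr (Or.inl rfl), tadj_rr.mpr (by decide)⟩
          · exact absurd (mem_fbd_inr.mpr (Or.inl rfl)) hx
          · exact ⟨Sum.inr 1, mem_fbd_inr.mpr (Or.inl rfl), tadj_rr.mpr (by decide)⟩
          · exact absurd (mem_fbd_inr.mpr (Or.inr rfl)) hx
    · -- fc S
      constructor
      · rintro (w | i) hx (v | j) hy hadj
        · exact hSind w (mem_fc_inl.mp hx) v (mem_fc_inl.mp hy) (tadj_ll.mp hadj)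
        · rcases mem_fc_inr.mp hy with rfl
          exact absurd (tadj_lr.mp hadj).1 (by decide)
        · rcases mem_fc_inr.mp hx with rfl
          exact absurd (tadj_rl.mp hadj).1 (by decide)
        · rcases mem_fc_inr.mp hx with rfl
          rcases mem_fc_inr.mp hy with rfl
          exact absurd (tadj_rr.mp hadj) (by decide)
      · rintro (v | i) hx
        · have hvS : v ∉ S := fun hvS => hx (mem_fc_inl.mpr hvS)
          obtain ⟨u, hu, hadj⟩ := hSdom v hvS
          exact ⟨Sum.inl u, mem_fc_inl.mpr hu, tadj_ll.mpr hadj⟩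
        · rcases fin4_cases i with rfl | rfl | rfl | rfl
          · exact ⟨Sum.inl u₀, mem_fc_inl.mpr hu₀S, tadj_lr.mpr ⟨rfl, hu₀U⟩⟩
          · exact ⟨Sum.inr 2, mem_fc_inr.mpr rfl, tadj_rr.mpr (by decide)⟩
          · exact absurd (mem_fc_inr.mpr rfl) hx
          · exact ⟨Sum.inr 2, mem_fc_inr.mpr rfl, tadj_rr.mpr (by decide)⟩

end Stmt17Aux

/-- `mis(G̃) ≤ 2·mis(G) + mis(G − U)`, with equality iff `G` has no maximal
independent set disjoint from `U`. -/
theorem stmt17 {V : Type*} [Fintype V] (G : SimpleGraph V) (U : Set V)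
    (hU : U.Nonempty) :
    misc (tildeG G U).Adj ≤
      2 * misc G.Adj + Set.ncard {S : Set V | IsMaxIndepOn G.Adj Uᶜ S} ∧
    (misc (tildeG G U).Adj =
        2 * misc G.Adj + Set.ncard {S : Set V | IsMaxIndepOn G.Adj Uᶜ S} ↔
      ¬ ∃ S : Set V, IsMaxIndep G.Adj S ∧ S ∩ U = ∅) := by
  classical
  open Stmt17Aux in
  have hkey := Stmt17Aux.keyEq G U
  set X : Set (Set V) := {S : Set V | IsMaxIndepOn G.Adj Uᶜ S} with hX
  set Y : Set (Set V) := {S : Set V | IsMaxIndep G.Adj S} with hY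
  set Z : Set (Set V) := {S : Set V | IsMaxIndep G.Adj S ∧ (S ∩ U).Nonempty} with hZ
  set W : Set (Set V) := {S : Set V | IsMaxIndep G.Adj S ∧ S ∩ U = ∅} with hW
  have hdisjAB : Disjoint (Stmt17Aux.fac '' X) (Stmt17Aux.fbd '' Y) := by
    rw [Set.disjoint_left]
    rintro T ⟨S1, _, rfl⟩ ⟨S2, _, heq⟩
    have h0 : Sum.inr 0 ∈ Stmt17Aux.fac S1 := Stmt17Aux.mem_fac_inr.mpr (Or.inl rfl)
    rw [← heq] at h0
    exact absurd (Stmt17Aux.mem_fbd_inr.mp h0) (by decide)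
  have hdisjAC : Disjoint (Stmt17Aux.fac '' X) (Stmt17Aux.fc '' Z) := by
    rw [Set.disjoint_left]
    rintro T ⟨S1, _, rfl⟩ ⟨S2, _, heq⟩
    have h0 : Sum.inr 0 ∈ Stmt17Aux.fac S1 := Stmt17Aux.mem_fac_inr.mpr (Or.inl rfl)
    rw [← heq] at h0
    exact absurd (Stmt17Aux.mem_fc_inr.mp h0) (by decide)
  have hdisjBC : Disjoint (Stmt17Aux.fbd '' Y) (Stmt17Aux.fc '' Z) := by
    rw [Set.disjoint_left]
    rintro T ⟨S1, _, rfl⟩ ⟨S2, _, heq⟩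
    have h1 : Sum.inr 1 ∈ Stmt17Aux.fbd S1 := Stmt17Aux.mem_fbd_inr.mpr (Or.inl rfl)
    rw [← heq] at h1
    exact absurd (Stmt17Aux.mem_fc_inr.mp h1) (by decide)
  have hmisc : misc (tildeG G U).Adj = X.ncard + Y.ncard + Z.ncard := by
    rw [misc, hkey, Set.ncard_union_eq (Set.disjoint_union_left.mpr ⟨hdisjAC, hdisjBC⟩)
        (Set.toFinite _) (Set.toFinite _),
      Set.ncard_union_eq hdisjAB (Set.toFinite _) (Set.toFinite _),
      Set.ncard_image_of_injective _ Stmt17Aux.fac_inj,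
      Set.ncard_image_of_injective _ Stmt17Aux.fbd_inj,
      Set.ncard_image_of_injective _ Stmt17Aux.fc_inj]
  have hYZW : Y = Z ∪ W := by
    ext S
    simp only [hY, hZ, hW, Set.mem_setOf_eq, Set.mem_union,
      ← Set.nonempty_iff_ne_empty]
    constructor
    · intro h
      by_cases hne : (S ∩ U).Nonempty
      · exact Or.inl ⟨h, hne⟩
      · exact Or.inr ⟨h, Set.not_nonempty_iff_eq_empty.mp hne⟩
    · rintro (⟨h, _⟩ | ⟨h, _⟩) <;> exact h
  have hdisjZW : Disjoint Z W := by
    rw [Set.disjoint_left]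
    rintro S ⟨_, hne⟩ ⟨_, he⟩
    rw [he] at hne
    exact Set.not_nonempty_empty hne
  have hYcard : Y.ncard = Z.ncard + W.ncard := by
    rw [hYZW, Set.ncard_union_eq hdisjZW (Set.toFinite _) (Set.toFinite _)]
  have hmG : misc G.Adj = Y.ncard := rfl
  have hWempty : W.ncard = 0 ↔ ¬ ∃ S : Set V, IsMaxIndep G.Adj S ∧ S ∩ U = ∅ := by
    rw [Set.ncard_eq_zero (Set.toFinite W), Set.eq_empty_iff_forall_notMem]
    simp [hW, Set.mem_setOf_eq]
  constructor
  · rw [hmisc, hmG]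
    omega
  · rw [hmisc, hmG, ← hWempty]
    omega
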